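/- Suppose P is twice differentiable with H_L-Lipschitz Hessian, ‖∇P(x) − g‖ ≤ C₁‖s‖², ‖∇²P(x) − H‖ ≤ C₂‖s‖, and s, λ satisfy the trust-region KKT conditions (g + (H+λI)s = 0, H + λI ⪰ 0). If λ ≥ 2(C₁ + C₂/2 + H_L/2 + η)‖s‖ with η > 0, then P(x) − P(x+s) ≥ η‖s‖³. -/

import Mathlib

open scoped RealInnerProductSpace

lemma aux_taylor_grad {n : ℕ} (HL : ℝ) (hHL : 0 ≤ HL)
    (gP : EuclideanSpace ℝ (Fin n) → EuclideanSpace ℝ (Fin n))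
    (hessP : EuclideanSpace ℝ (Fin n) → (EuclideanSpace ℝ (Fin n) →L[ℝ] EuclideanSpace ℝ (Fin n)))
    (hhess : ∀ x, HasFDerivAt gP (hessP x) x)
    (hlipHess : ∀ a b, ‖hessP a - hessP b‖ ≤ HL * ‖a - b‖)
    (x u : EuclideanSpace ℝ (Fin n)) :
    ‖gP (x + u) - gP x - hessP x u‖ ≤ HL * ‖u‖ ^ 2 := by
  have hconv : Convex ℝ (segment ℝ x (x + u)) := convex_segment _ _
  have key := hconv.norm_image_sub_le_of_norm_hasFDerivWithin_le
    (f := fun y => gP y - hessP x y) (f' := fun y => hessP y - hessP x) (C := HL * ‖u‖)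
    (fun y _ => ((hhess y).sub ((hessP x).hasFDerivAt)).hasFDerivWithinAt)
    (fun y hy => by
      rcases (segment_eq_image' ℝ x (x + u) ▸ hy) with ⟨θ, hθ, rfl⟩
      calc ‖hessP (x + θ • (x + u - x)) - hessP x‖
          ≤ HL * ‖x + θ • (x + u - x) - x‖ := hlipHess _ _
        _ ≤ HL * ‖u‖ := by
            simp only [add_sub_cancel_left, add_sub_cancel_left, norm_smul]
            have : ‖θ‖ ≤ 1 := by rw [Real.norm_eq_abs, abs_of_nonneg hθ.1]; exact hθ.2
            exact mul_le_mul_of_nonneg_left (by nlinarith [norm_nonneg u]) hHL)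
    (left_mem_segment ℝ _ _) (right_mem_segment ℝ _ _)
  have heq : gP (x + u) - hessP x (x + u) - (gP x - hessP x x)
      = gP (x + u) - gP x - hessP x u := by
    rw [map_add]; abel
  rw [heq] at key
  calc ‖gP (x + u) - gP x - hessP x u‖ ≤ HL * ‖u‖ * ‖x + u - x‖ := key
    _ = HL * ‖u‖ ^ 2 := by rw [add_sub_cancel_left]; ring

/-- If `P` has `H_L`-Lipschitz Hessian, `‖∇P(x) − g‖ ≤ C₁‖s‖²`,
`‖∇²P(x) − H‖ ≤ C₂‖s‖`, `(s, λ)` satisfy the trust-region KKT conditions, and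
`λ ≥ 2(C₁ + C₂/2 + H_L/2 + η)‖s‖`, then `P(x) − P(x+s) ≥ η‖s‖³`. -/
theorem stmt16 {n : ℕ} (HL C1 C2 η lam : ℝ)
    (hHL : 0 < HL) (hC1 : 0 ≤ C1) (hC2 : 0 ≤ C2) (hη0 : 0 < η) (hη1 : η < 1) (hlam0 : 0 ≤ lam)
    (P : EuclideanSpace ℝ (Fin n) → ℝ)
    (gP : EuclideanSpace ℝ (Fin n) → EuclideanSpace ℝ (Fin n))
    (hessP : EuclideanSpace ℝ (Fin n) → (EuclideanSpace ℝ (Fin n) →L[ℝ] EuclideanSpace ℝ (Fin n)))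
    (hgrad : ∀ x, HasGradientAt P (gP x) x)
    (hhess : ∀ x, HasFDerivAt gP (hessP x) x)
    (hlipHess : ∀ a b, ‖hessP a - hessP b‖ ≤ HL * ‖a - b‖)
    (x g s : EuclideanSpace ℝ (Fin n))
    (H : EuclideanSpace ℝ (Fin n) →L[ℝ] EuclideanSpace ℝ (Fin n)) (hsa : IsSelfAdjoint H)
    (hgerr : ‖gP x - g‖ ≤ C1 * ‖s‖ ^ 2)
    (hHerr : ‖hessP x - H‖ ≤ C2 * ‖s‖)
    (hkkt1 : g + (H + lam • ContinuousLinearMap.id ℝ (EuclideanSpace ℝ (Fin n))) s = 0)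
    (hkkt2 : ∀ v, 0 ≤ ⟪v, (H + lam • ContinuousLinearMap.id ℝ (EuclideanSpace ℝ (Fin n))) v⟫)
    (hlam : lam ≥ 2 * (C1 + C2 / 2 + HL / 2 + η) * ‖s‖) :
    P x - P (x + s) ≥ η * ‖s‖ ^ 3 := by
  set a : ℝ := ⟪gP x, s⟫ with ha
  set b : ℝ := ⟪hessP x s, s⟫ with hb
  set c : ℝ := HL * ‖s‖ ^ 3 with hc
  -- the auxiliary scalar function
  set Φ : ℝ → ℝ := fun t => P (x + t • s) - (a * t + b * (t ^ 2 / 2) + c * (t ^ 3 / 3)) with hΦ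
  have hcurve : ∀ t : ℝ, HasDerivAt (fun t : ℝ => x + t • s) s t := by
    intro t
    simpa using ((hasDerivAt_id t).smul_const s).const_add x
  have hPd : ∀ t : ℝ, HasDerivAt (fun t : ℝ => P (x + t • s)) ⟪gP (x + t • s), s⟫ t := by
    intro t
    have h1 := ((hgrad (x + t • s)).hasFDerivAt).comp_hasDerivAt t (hcurve t)
    simp at h1
    exact h1
  have hΦd : ∀ t : ℝ, HasDerivAt Φ (⟪gP (x + t • s), s⟫ - (a + b * t + c * t ^ 2)) t := by
    intro t
    have h2 : HasDerivAt (fun t : ℝ => a * t + b * (t ^ 2 / 2) + c * (t ^ 3 / 3))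
        (a + b * t + c * t ^ 2) t := by
      have : HasDerivAt (fun y : ℝ => a * y + b * (y ^ 2 / 2) + c * (y ^ 3 / 3)) _ t := (((hasDerivAt_id t).const_mul a).add
        (((hasDerivAt_pow 2 t).div_const 2).const_mul b)).add
        (((hasDerivAt_pow 3 t).div_const 3).const_mul c)
      convert this using 1
      ring
    exact (hPd t).sub h2
  -- derivative nonpositive on [0,1]
  have hderiv_le : ∀ t ∈ Set.Icc (0 : ℝ) 1, ⟪gP (x + t • s), s⟫ ≤ a + b * t + c * t ^ 2 := by
    intro t ht
    have hA := aux_taylor_grad HL hHL.le gP hessP hhess hlipHess x (t • s)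
    have hns : ‖t • s‖ ^ 2 = t ^ 2 * ‖s‖ ^ 2 := by
      rw [norm_smul, Real.norm_eq_abs, mul_pow, sq_abs]
    have hsplit : ⟪gP (x + t • s), s⟫
        = a + t * b + ⟪gP (x + t • s) - gP x - hessP x (t • s), s⟫ := by
      rw [ha, hb]
      have h3 : (hessP x) (t • s) = t • hessP x s := map_smul _ _ _
      rw [inner_sub_left, inner_sub_left, h3, real_inner_smul_left]
      ring
    have hCS : ⟪gP (x + t • s) - gP x - hessP x (t • s), s⟫ ≤ HL * ‖t • s‖ ^ 2 * ‖s‖ :=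
      le_trans (real_inner_le_norm _ _) (mul_le_mul_of_nonneg_right hA (norm_nonneg s))
    rw [hsplit]
    have : HL * ‖t • s‖ ^ 2 * ‖s‖ = c * t ^ 2 := by rw [hns, hc]; ring
    linarith [this ▸ hCS]
  -- Φ is antitone on [0,1]
  have hanti : AntitoneOn Φ (Set.Icc (0 : ℝ) 1) := by
    apply antitoneOn_of_deriv_nonpos (convex_Icc 0 1)
    · exact fun t _ => ((hΦd t).differentiableAt).continuousAt.continuousWithinAt
    · exact fun t _ => ((hΦd t).differentiableAt).differentiableWithinAt
    · intro t ht
      rw [interior_Icc] at ht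
      rw [(hΦd t).deriv]
      have := hderiv_le t ⟨ht.1.le, ht.2.le⟩
      linarith
  have hΦ10 : Φ 1 ≤ Φ 0 := hanti (by norm_num) (by norm_num) (by norm_num)
  have htaylor : P (x + s) ≤ P x + a + b / 2 + c / 3 := by
    have h0 : Φ 0 = P x := by simp [hΦ]
    have h1 : Φ 1 = P (x + s) - (a + b / 2 + c / 3) := by simp [hΦ]; ring
    rw [h0, h1] at hΦ10
    linarith
  -- KKT consequences
  have hgs : g = -(H s + lam • s) := by
    have := hkkt1
    simp only [ContinuousLinearMap.add_apply, ContinuousLinearMap.smul_apply,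
      ContinuousLinearMap.id_apply] at this
    linear_combination (norm := module) this
  have hinner_g : ⟪g, s⟫ = -⟪H s, s⟫ - lam * ‖s‖ ^ 2 := by
    rw [hgs]
    rw [inner_neg_left, inner_add_left, real_inner_smul_left, real_inner_self_eq_norm_sq]
    ring
  have hpsd : 0 ≤ ⟪H s, s⟫ + lam * ‖s‖ ^ 2 := by
    have := hkkt2 s
    simp only [ContinuousLinearMap.add_apply, ContinuousLinearMap.smul_apply,
      ContinuousLinearMap.id_apply, inner_add_right, real_inner_smul_right] at this
    rw [real_inner_self_eq_norm_sq] at this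
    rw [real_inner_comm]
    linarith
  have ha_le : a ≤ -⟪H s, s⟫ - lam * ‖s‖ ^ 2 + C1 * ‖s‖ ^ 3 := by
    have : a = ⟪g, s⟫ + ⟪gP x - g, s⟫ := by rw [ha, inner_sub_left]; ring
    have hCS : ⟪gP x - g, s⟫ ≤ C1 * ‖s‖ ^ 2 * ‖s‖ :=
      le_trans (real_inner_le_norm _ _) (mul_le_mul_of_nonneg_right hgerr (norm_nonneg s))
    rw [this, hinner_g]
    have : C1 * ‖s‖ ^ 2 * ‖s‖ = C1 * ‖s‖ ^ 3 := by ring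
    linarith [this ▸ hCS]
  have hb_le : b ≤ ⟪H s, s⟫ + C2 * ‖s‖ ^ 3 := by
    have hsplit : b = ⟪H s, s⟫ + ⟪(hessP x - H) s, s⟫ := by
      rw [hb]
      simp [ContinuousLinearMap.sub_apply, inner_sub_left]
    have hop : ‖(hessP x - H) s‖ ≤ C2 * ‖s‖ * ‖s‖ :=
      le_trans ((hessP x - H).le_opNorm s) (mul_le_mul_of_nonneg_right hHerr (norm_nonneg s))
    have hCS : ⟪(hessP x - H) s, s⟫ ≤ C2 * ‖s‖ * ‖s‖ * ‖s‖ :=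
      le_trans (real_inner_le_norm _ _) (mul_le_mul_of_nonneg_right hop (norm_nonneg s))
    rw [hsplit]
    have : C2 * ‖s‖ * ‖s‖ * ‖s‖ = C2 * ‖s‖ ^ 3 := by ring
    linarith [this ▸ hCS]
  -- combine
  have hlam3 : lam * ‖s‖ ^ 2 ≥ 2 * (C1 + C2 / 2 + HL / 2 + η) * ‖s‖ ^ 3 := by
    have := mul_le_mul_of_nonneg_right hlam (sq_nonneg ‖s‖)
    calc lam * ‖s‖ ^ 2 ≥ 2 * (C1 + C2 / 2 + HL / 2 + η) * ‖s‖ * ‖s‖ ^ 2 := this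
      _ = 2 * (C1 + C2 / 2 + HL / 2 + η) * ‖s‖ ^ 3 := by ring
  have hcube : (0:ℝ) ≤ ‖s‖ ^ 3 := by positivity
  nlinarith [htaylor, ha_le, hb_le, hpsd, hlam3, hcube, hc]
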